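/- Let T be a positive integer, let x_1, …, x_T and a_1, …, a_T be positive reals, and let α ∈ [0,1]. Then ∑_{t=1}^{T} x_t^{1−α} a_t / √(1 + ∑_{s=1}^{t} x_s^{1−2α}) ≤ 2·√( (∑_{t=1}^{T} x_t a_t^2) · log(1 + ∑_{t=1}^{T} x_t^{1−2α}) ). -/

import Mathlib

open Finset

lemma sum_div_le_log_aux (b : ℕ → ℝ) (n : ℕ) (hb : ∀ t ∈ Finset.Icc 1 n, 0 < b t) :
    ∑ t ∈ Finset.Icc 1 n, b t / (1 + ∑ s ∈ Finset.Icc 1 t, b s)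
      ≤ Real.log (1 + ∑ s ∈ Finset.Icc 1 n, b s) := by
  induction n with
  | zero => simp
  | succ n ih =>
    have hb' : ∀ t ∈ Finset.Icc 1 n, 0 < b t := fun t ht =>
      hb t (Finset.Icc_subset_Icc_right (Nat.le_succ n) ht)
    have hSn : (0:ℝ) < 1 + ∑ s ∈ Finset.Icc 1 n, b s := by
      have : (0:ℝ) ≤ ∑ s ∈ Finset.Icc 1 n, b s :=
        Finset.sum_nonneg fun s hs => (hb' s hs).le
      linarith
    have hbn1 : 0 < b (n+1) := hb _ (by simp)
    rw [Finset.sum_Icc_succ_top (by omega : 1 ≤ n + 1),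
        Finset.sum_Icc_succ_top (by omega : 1 ≤ n + 1)]
    set Sn := 1 + ∑ s ∈ Finset.Icc 1 n, b s with hSndef
    have key : b (n+1) / (Sn + b (n+1)) ≤ Real.log (Sn + b (n+1)) - Real.log Sn := by
      have h1 : Real.log (Sn / (Sn + b (n+1))) ≤ Sn / (Sn + b (n+1)) - 1 :=
        Real.log_le_sub_one_of_pos (by positivity)
      rw [Real.log_div (by linarith) (by linarith)] at h1
      have h2 : Sn / (Sn + b (n+1)) - 1 = -(b (n+1) / (Sn + b (n+1))) := by
        field_simp
        ring
      rw [h2] at h1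
      linarith
    have ih' := ih hb'
    have : (1 : ℝ) + (∑ s ∈ Finset.Icc 1 n, b s + b (n+1)) = Sn + b (n+1) := by
      rw [hSndef]; ring
    rw [this]
    calc (∑ t ∈ Finset.Icc 1 n, b t / (1 + ∑ s ∈ Finset.Icc 1 t, b s))
          + b (n+1) / (Sn + b (n+1))
        ≤ Real.log Sn + (Real.log (Sn + b (n+1)) - Real.log Sn) := by
          exact add_le_add ih' key
      _ = Real.log (Sn + b (n+1)) := by ring

/-- Weighted learning-rate design inequality (Lemma `app_lr_design_gen`). -/
theorem lr_design_inequality_weighted (T : ℕ) (hT : 1 ≤ T) (x a : ℕ → ℝ)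
    (hx : ∀ t ∈ Finset.Icc 1 T, 0 < x t)
    (ha : ∀ t ∈ Finset.Icc 1 T, 0 < a t)
    (α : ℝ) (hα : α ∈ Set.Icc (0 : ℝ) 1) :
    ∑ t ∈ Finset.Icc 1 T,
        x t ^ (1 - α) * a t / Real.sqrt (1 + ∑ s ∈ Finset.Icc 1 t, x s ^ (1 - 2 * α))
      ≤ 2 * Real.sqrt ((∑ t ∈ Finset.Icc 1 T, x t * (a t) ^ 2) *
          Real.log (1 + ∑ t ∈ Finset.Icc 1 T, x t ^ (1 - 2 * α))) := by
  set b : ℕ → ℝ := fun t => x t ^ (1 - 2 * α) with hbdef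
  set S : ℕ → ℝ := fun t => 1 + ∑ s ∈ Finset.Icc 1 t, b s with hSdef
  have hb : ∀ t ∈ Finset.Icc 1 T, 0 < b t := fun t ht =>
    Real.rpow_pos_of_pos (hx t ht) _
  -- positivity of S t for t ≤ T
  have hS : ∀ t, t ≤ T → 0 < S t := by
    intro t ht
    have : (0:ℝ) ≤ ∑ s ∈ Finset.Icc 1 t, b s :=
      Finset.sum_nonneg fun s hs => (hb s (Finset.Icc_subset_Icc_right ht hs)).le
    simp only [hSdef]; linarith
  set f : ℕ → ℝ := fun t => Real.sqrt (x t) * a t with hfdef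
  set g : ℕ → ℝ := fun t => Real.sqrt (b t) / Real.sqrt (S t) with hgdef
  -- rewrite summands
  have hsum : ∑ t ∈ Finset.Icc 1 T, x t ^ (1 - α) * a t / Real.sqrt (S t)
      = ∑ t ∈ Finset.Icc 1 T, f t * g t := by
    apply Finset.sum_congr rfl
    intro t ht
    have hxt := hx t ht
    have hrw : Real.sqrt (x t) * Real.sqrt (b t) = x t ^ (1 - α) := by
      rw [hbdef]
      simp only [Real.sqrt_eq_rpow]
      rw [← Real.rpow_mul hxt.le, ← Real.rpow_add hxt]
      congr 1
      ring
    simp only [hfdef, hgdef]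
    field_simp
    rw [← hrw]
    ring
  rw [hsum]
  -- Cauchy-Schwarz
  have hCS : (∑ t ∈ Finset.Icc 1 T, f t * g t) ^ 2
      ≤ (∑ t ∈ Finset.Icc 1 T, f t ^ 2) * (∑ t ∈ Finset.Icc 1 T, g t ^ 2) :=
    Finset.sum_mul_sq_le_sq_mul_sq (Finset.Icc 1 T) f g
  have hf2 : ∑ t ∈ Finset.Icc 1 T, f t ^ 2 = ∑ t ∈ Finset.Icc 1 T, x t * (a t) ^ 2 := by
    apply Finset.sum_congr rfl
    intro t ht
    simp only [hfdef]
    rw [mul_pow, Real.sq_sqrt (hx t ht).le]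
  have hg2 : ∑ t ∈ Finset.Icc 1 T, g t ^ 2 ≤ Real.log (S T) := by
    have : ∑ t ∈ Finset.Icc 1 T, g t ^ 2 = ∑ t ∈ Finset.Icc 1 T, b t / S t := by
      apply Finset.sum_congr rfl
      intro t ht
      have htT := (Finset.mem_Icc.mp ht).2
      simp only [hgdef]
      rw [div_pow, Real.sq_sqrt (hb t ht).le, Real.sq_sqrt (hS t htT).le]
    rw [this]
    exact sum_div_le_log_aux b T hb
  have hfg_nonneg : 0 ≤ ∑ t ∈ Finset.Icc 1 T, f t * g t := by
    apply Finset.sum_nonneg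
    intro t ht
    have := (Finset.mem_Icc.mp ht).2
    apply mul_nonneg
    · exact mul_nonneg (Real.sqrt_nonneg _) (ha t ht).le
    · exact div_nonneg (Real.sqrt_nonneg _) (Real.sqrt_nonneg _)
  have hA_nonneg : 0 ≤ ∑ t ∈ Finset.Icc 1 T, x t * (a t) ^ 2 :=
    Finset.sum_nonneg fun t ht => mul_nonneg (hx t ht).le (sq_nonneg _)
  have hlog_nonneg : 0 ≤ Real.log (S T) := by
    apply Real.log_nonneg
    have : (0:ℝ) ≤ ∑ s ∈ Finset.Icc 1 T, b s :=
      Finset.sum_nonneg fun s hs => (hb s hs).le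
    simp only [hSdef]; linarith
  have step1 : ∑ t ∈ Finset.Icc 1 T, f t * g t
      ≤ Real.sqrt ((∑ t ∈ Finset.Icc 1 T, x t * (a t) ^ 2) * Real.log (S T)) := by
    rw [← Real.sqrt_sq hfg_nonneg]
    apply Real.sqrt_le_sqrt
    calc (∑ t ∈ Finset.Icc 1 T, f t * g t) ^ 2
        ≤ (∑ t ∈ Finset.Icc 1 T, f t ^ 2) * (∑ t ∈ Finset.Icc 1 T, g t ^ 2) := hCS
      _ ≤ (∑ t ∈ Finset.Icc 1 T, x t * (a t) ^ 2) * Real.log (S T) := by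
          rw [hf2]
          exact mul_le_mul_of_nonneg_left hg2 hA_nonneg
  have h2 : Real.sqrt ((∑ t ∈ Finset.Icc 1 T, x t * (a t) ^ 2) * Real.log (S T))
      ≤ 2 * Real.sqrt ((∑ t ∈ Finset.Icc 1 T, x t * (a t) ^ 2) * Real.log (S T)) := by
    nlinarith [Real.sqrt_nonneg ((∑ t ∈ Finset.Icc 1 T, x t * (a t) ^ 2) * Real.log (S T))]
  calc ∑ t ∈ Finset.Icc 1 T, f t * g t
      ≤ Real.sqrt ((∑ t ∈ Finset.Icc 1 T, x t * (a t) ^ 2) * Real.log (S T)) := step1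
    _ ≤ 2 * Real.sqrt ((∑ t ∈ Finset.Icc 1 T, x t * (a t) ^ 2) * Real.log (S T)) := h2
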